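/- Fix distinct strictly increasing functions f_0, ..., enumerated as f_{s(i)} ∈ ω^ω for i < ω+2 along a chain s(0) < s(1) < ... < s(ω) < s(ω+1), and natural numbers n(i) for i < ω+1, such that for all i < j in ω+2 (with i,j comparable in the chain order): f_{s(j)}(Δ(f_{s(i)}, f_{s(j)})) = n(i), where Δ(f,g) is the least n with f(n) ≠ g(n). Then there is no infinite set A ⊆ ω and fixed n with n(i) = n for all i ∈ A. -/
import Mathlib


/-- `Δ f g`: the least point of disagreement of two functions `ω → ω`. -/
noncomputable def deltaFn (f g : ℕ → ℕ) : ℕ := sInf {n : ℕ | f n ≠ g n}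

lemma deltaFn_ne {f g : ℕ → ℕ} (h : f ≠ g) :
    f (deltaFn f g) ≠ g (deltaFn f g) :=
  Nat.sInf_mem (Set.nonempty_def.mpr (Function.ne_iff.mp h))

lemma deltaFn_eq_of_lt {f g : ℕ → ℕ} {k : ℕ} (h : k < deltaFn f g) : f k = g k := by
  by_contra hn
  exact absurd (Nat.sInf_le hn) (not_le.mpr h)

/-- Given pairwise distinct strictly increasing functions
`f 0, f 1, …, fω, fω1` (indexed along a chain of order type `ω + 2`) and values
`n i` (`i < ω`) and `nω` such that for all `i < j` in `ω + 2` the later function `g`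
and earlier function `h` satisfy `g (Δ(h,g)) = n(earlier index)`, there is no infinite
`A ⊆ ω` on which `n` is constant. -/
theorem no_infinite_constant_n (f : ℕ → ℕ → ℕ) (fω fω1 : ℕ → ℕ) (n : ℕ → ℕ) (nω : ℕ)
    (hmono : ∀ i, StrictMono (f i)) (hmω : StrictMono fω) (hmω1 : StrictMono fω1)
    (hdist : ∀ i j, i ≠ j → f i ≠ f j)
    (hd1 : ∀ i, f i ≠ fω) (hd2 : ∀ i, f i ≠ fω1) (hd3 : fω ≠ fω1)
    (h1 : ∀ i j, i < j → f j (deltaFn (f i) (f j)) = n i)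
    (h2 : ∀ i, fω (deltaFn (f i) fω) = n i)
    (h3 : ∀ i, fω1 (deltaFn (f i) fω1) = n i)
    (h4 : fω1 (deltaFn fω fω1) = nω) :
    ¬ ∃ A : Set ℕ, A.Infinite ∧ ∃ m : ℕ, ∀ i ∈ A, n i = m := by
  classical
  rintro ⟨A, hA, m, hm⟩
  haveI := hA.to_subtype
  set a : ℕ → ℕ := fun k => Nat.orderEmbeddingOfSet A k with ha
  have hamono : StrictMono a := (Nat.orderEmbeddingOfSet A).strictMono
  have haA : ∀ k, a k ∈ A := fun k => by
    have := Nat.orderEmbeddingOfSet_range A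
    exact this ▸ Set.mem_range_self k
  set D : ℕ → ℕ := fun k => deltaFn (f (a k)) (f (a (k + 1))) with hD
  -- main claim: D is strictly decreasing step by step
  have key : ∀ k, D (k + 1) < D k := by
    intro k
    have hij : a k < a (k + 1) := hamono (Nat.lt_succ_self k)
    have hjl : a (k + 1) < a (k + 2) := hamono (Nat.lt_succ_self (k + 1))
    have hil : a k < a (k + 2) := hij.trans hjl
    -- values at the deltas are all m
    have e1 : f (a (k + 1)) (D k) = m := by
      rw [show f (a (k + 1)) (D k) = n (a k) from h1 _ _ hij]
      exact hm _ (haA k)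
    have e2 : f (a (k + 2)) (D (k + 1)) = m := by
      rw [show f (a (k + 2)) (D (k + 1)) = n (a (k + 1)) from h1 _ _ hjl]
      exact hm _ (haA (k + 1))
    have e3 : f (a (k + 2)) (deltaFn (f (a k)) (f (a (k + 2)))) = m := by
      rw [h1 _ _ hil]; exact hm _ (haA k)
    have hinj := (hmono (a (k + 2))).injective
    -- Δ(f i, f l) = Δ(f j, f l) = D (k+1)
    have jl_ne : f (a (k + 1)) ≠ f (a (k + 2)) := hdist _ _ hjl.ne
    have hne2 : f (a (k + 1)) (D (k + 1)) ≠ m := fun h => by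
      exact deltaFn_ne jl_ne (h.trans e2.symm)
    -- D k ≠ D (k+1)
    have hne : D k ≠ D (k + 1) := fun h => hne2 (h ▸ e1)
    rcases lt_or_gt_of_ne hne with hlt | hgt
    · -- D k < D (k+1) is impossible
      exfalso
      have : f (a (k + 1)) (D k) = f (a (k + 2)) (D k) := deltaFn_eq_of_lt hlt
      have : f (a (k + 2)) (D k) = f (a (k + 2)) (D (k + 1)) := by
        rw [← this, e1, e2]
      exact hne (hinj this)
    · exact hgt
  -- no infinite strictly decreasing sequence of naturals
  have hbd : ∀ k, D k + k ≤ D 0 := by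
    intro k
    induction k with
    | zero => simp
    | succ k ih => have := key k; omega
  have := hbd (D 0 + 1)
  omega
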